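/- Let u, v ∈ ℂⁿ (n ≥ 2) and T = [u,v] = ½(uv* + vu*). Then: tr T = Re⟨u,v⟩; tr(T²) = ½( ‖u‖²‖v‖² + (Re⟨u,v⟩)² − (Im⟨u,v⟩)² ); the eigenvalues of T (with multiplicity) are a₊, a₋ and 0 repeated n−2 times, where a₊ = ½( Re⟨u,v⟩ + √( ‖u‖²‖v‖² − (Im⟨u,v⟩)² ) ) ≥ 0 and a₋ = ½( Re⟨u,v⟩ − √( ‖u‖²‖v‖² − (Im⟨u,v⟩)² ) ) ≤ 0; and the nuclear norm satisfies ‖T‖₁ = a₊ + |a₋| = √( ‖u‖²‖v‖² − (Im⟨u,v⟩)² ). In particular T has at most one positive and at most one negative eigenvalue. -/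

import Mathlib

open scoped BigOperators ComplexConjugate
open Matrix

noncomputable section

/-- Inner product on `ℂⁿ`, linear in the first argument: `⟨x,y⟩ = ∑ⱼ xⱼ conj(yⱼ)`. -/
def cip {n : ℕ} (x y : Fin n → ℂ) : ℂ := ∑ j, x j * (starRingEnd ℂ) (y j)

/-- Squared Euclidean norm on `ℂⁿ`. -/
def cnSq {n : ℕ} (x : Fin n → ℂ) : ℝ := ∑ j, Complex.normSq (x j)

/-- The phaseless measurement map `α(x)ₖ = |⟨x,fₖ⟩|²`. -/
def alphaMap {n m : ℕ} (f : Fin m → Fin n → ℂ) (x : Fin n → ℂ) : Fin m → ℝ :=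
  fun k => Complex.normSq (cip x (f k))

/-- `α` is injective up to a global phase. -/
def InjUpToPhase {n m : ℕ} (f : Fin m → Fin n → ℂ) : Prop :=
  ∀ x y : Fin n → ℂ, alphaMap f x = alphaMap f y → ∃ c : ℂ, ‖c‖ = 1 ∧ y = c • x
/-- Number of strictly positive eigenvalues (with multiplicity) of a Hermitian matrix. -/
def posCount {n : ℕ} {𝕜 : Type*} [RCLike 𝕜] {X : Matrix (Fin n) (Fin n) 𝕜}
    (hX : X.IsHermitian) : ℕ :=
  Nat.card {i // 0 < hX.eigenvalues i}

/-- Number of strictly negative eigenvalues (with multiplicity) of a Hermitian matrix. -/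
def negCount {n : ℕ} {𝕜 : Type*} [RCLike 𝕜] {X : Matrix (Fin n) (Fin n) 𝕜}
    (hX : X.IsHermitian) : ℕ :=
  Nat.card {i // hX.eigenvalues i < 0}

/-- Nuclear norm of a Hermitian matrix: sum of absolute values of eigenvalues. -/
def nucNorm {n : ℕ} {𝕜 : Type*} [RCLike 𝕜] {X : Matrix (Fin n) (Fin n) 𝕜}
    (hX : X.IsHermitian) : ℝ :=
  ∑ i, |hX.eigenvalues i|

/-- Rank-one operator `u v*`, with entries `uᵢ conj(vⱼ)`. -/
def outer {n : ℕ} (u v : Fin n → ℂ) : Matrix (Fin n) (Fin n) ℂ :=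
  Matrix.vecMulVec u (star v)

/-- Symmetric outer product `[u,v] = ½(uv* + vu*)`. -/
def symOuter {n : ℕ} (u v : Fin n → ℂ) : Matrix (Fin n) (Fin n) ℂ :=
  (1/2 : ℂ) • (outer u v + outer v u)

lemma traceA {n : ℕ} (u v : Fin n → ℂ) :
    (symOuter u v).trace = ((cip u v).re : ℂ) := by
  have h : (symOuter u v).trace = (1/2 : ℂ) * (cip u v + (starRingEnd ℂ) (cip u v)) := by
    simp [symOuter, outer, Matrix.trace, Matrix.diag, Matrix.vecMulVec_apply, cip,
      map_sum]
    rw [← Finset.sum_add_distrib, Finset.mul_sum]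
    exact Finset.sum_congr rfl fun i _ => by ring
  rw [h, Complex.add_conj]
  push_cast
  ring


lemma trace_outer_mul_outer {n : ℕ} (a b c d : Fin n → ℂ) :
    (outer a b * outer c d).trace = cip c b * cip a d := by
  simp only [Matrix.trace, Matrix.diag, Matrix.mul_apply, outer, Matrix.vecMulVec_apply,
    Pi.star_apply, cip]
  rw [Finset.sum_mul]
  rw [Finset.sum_comm]
  refine Finset.sum_congr rfl fun j _ => ?_
  rw [Finset.mul_sum]
  exact Finset.sum_congr rfl fun i _ => by simp [Complex.star_def]; ring

lemma cip_self {n : ℕ} (x : Fin n → ℂ) : cip x x = (cnSq x : ℂ) := by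
  simp [cip, cnSq, Complex.normSq_eq_conj_mul_self, mul_comm]

lemma cip_conj {n : ℕ} (u v : Fin n → ℂ) : cip v u = (starRingEnd ℂ) (cip u v) := by
  simp [cip, map_sum, mul_comm]

lemma traceB {n : ℕ} (u v : Fin n → ℂ) :
    (symOuter u v * symOuter u v).trace
      = (((1/2 : ℝ) * (cnSq u * cnSq v + (cip u v).re ^ 2 - (cip u v).im ^ 2) : ℝ) : ℂ) := by
  have h : (symOuter u v * symOuter u v).trace
      = (1/4 : ℂ) * (cip u v ^ 2 + (starRingEnd ℂ) (cip u v) ^ 2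
          + 2 * ((cnSq u : ℂ) * (cnSq v : ℂ))) := by
    simp only [symOuter, Matrix.smul_mul, Matrix.mul_smul, Matrix.trace_smul,
      Matrix.add_mul, Matrix.mul_add, Matrix.trace_add, smul_eq_mul,
      trace_outer_mul_outer, cip_self, ← cip_conj]
    ring
  rw [h]
  have h2 : cip u v ^ 2 + (starRingEnd ℂ) (cip u v) ^ 2
      = (2 * ((cip u v).re ^ 2 - (cip u v).im ^ 2) : ℝ) := by
    have := Complex.add_conj (cip u v ^ 2)
    rw [map_pow] at this
    rw [this]
    push_cast
    rw [sq (cip u v), Complex.mul_re]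
    push_cast
    ring
  rw [h2]
  push_cast
  ring

lemma trace_eq_sum_eigs {n : ℕ} {A : Matrix (Fin n) (Fin n) ℂ} (hA : A.IsHermitian) :
    A.trace = ∑ i, (hA.eigenvalues i : ℂ) := by
  have h1 : (star (hA.eigenvectorUnitary : Matrix (Fin n) (Fin n) ℂ))
      * (hA.eigenvectorUnitary : Matrix (Fin n) (Fin n) ℂ) = 1 :=
    Matrix.UnitaryGroup.star_mul_self _
  conv_lhs => rw [hA.spectral_theorem, Unitary.conjStarAlgAut_apply]
  rw [Matrix.trace_mul_comm, ← mul_assoc, h1, one_mul, Matrix.trace_diagonal]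
  simp

lemma trace_sq_eq_sum_eigs {n : ℕ} {A : Matrix (Fin n) (Fin n) ℂ} (hA : A.IsHermitian) :
    (A * A).trace = ∑ i, (hA.eigenvalues i : ℂ) ^ 2 := by
  have h1 : (star (hA.eigenvectorUnitary : Matrix (Fin n) (Fin n) ℂ))
      * (hA.eigenvectorUnitary : Matrix (Fin n) (Fin n) ℂ) = 1 :=
    Matrix.UnitaryGroup.star_mul_self _
  set U := (hA.eigenvectorUnitary : Matrix (Fin n) (Fin n) ℂ)
  set D := Matrix.diagonal (RCLike.ofReal ∘ hA.eigenvalues : Fin n → ℂ)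
  have key : A * A = U * (D * D) * star U := by
    conv_lhs => rw [hA.spectral_theorem, Unitary.conjStarAlgAut_apply]
    change U * D * star U * (U * D * star U) = U * (D * D) * star U
    have h2 : ∀ X : Matrix (Fin n) (Fin n) ℂ, star U * (U * X) = X := fun X => by
      rw [← mul_assoc, h1, one_mul]
    simp only [mul_assoc, h2]
  rw [key, Matrix.trace_mul_comm, ← mul_assoc, h1, one_mul, Matrix.diagonal_mul_diagonal,
    Matrix.trace_diagonal]
  simp [sq]

lemma outer_mulVec {n : ℕ} (a b x : Fin n → ℂ) :
    (outer a b) *ᵥ x = (star b ⬝ᵥ x) • a := by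
  funext i
  simp only [outer, Matrix.mulVec, dotProduct, Matrix.vecMulVec_apply,
    Pi.star_apply, Pi.smul_apply, smul_eq_mul, Finset.sum_mul, Finset.mul_sum]
  exact Finset.sum_congr rfl fun j _ => by ring

lemma symOuter_mulVec {n : ℕ} (u v x : Fin n → ℂ) :
    (symOuter u v) *ᵥ x
      = ((1/2 : ℂ) * (star v ⬝ᵥ x)) • u + ((1/2 : ℂ) * (star u ⬝ᵥ x)) • v := by
  simp only [symOuter, Matrix.smul_mulVec, Matrix.add_mulVec, outer_mulVec,
    smul_add, smul_smul]

lemma rank_le_two {n : ℕ} (u v : Fin n → ℂ) : (symOuter u v).rank ≤ 2 := by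
  have hspan : LinearMap.range (symOuter u v).mulVecLin
      ≤ Submodule.span ℂ ({u, v} : Set (Fin n → ℂ)) := by
    rintro _ ⟨x, rfl⟩
    rw [Matrix.mulVecLin_apply, symOuter_mulVec]
    exact Submodule.add_mem _
      (Submodule.smul_mem _ _ (Submodule.subset_span (by simp)))
      (Submodule.smul_mem _ _ (Submodule.subset_span (by simp)))
  have h1 : (symOuter u v).rank ≤ Module.finrank ℂ (Submodule.span ℂ ({u, v} : Set (Fin n → ℂ))) :=
    Submodule.finrank_mono hspan
  refine h1.trans ?_
  classical
  refine (finrank_span_le_card _).trans ?_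
  have : ({u, v} : Set (Fin n → ℂ)).toFinset ⊆ {u, v} := by
    intro z hz
    simpa using (Set.mem_toFinset.mp hz)
  exact (Finset.card_le_card this).trans ((Finset.card_insert_le _ _).trans (by simp))

lemma cs {n : ℕ} (u v : Fin n → ℂ) : Complex.normSq (cip u v) ≤ cnSq u * cnSq v := by
  have habs : ‖cip u v‖ ≤ ∑ j, ‖u j‖ * ‖v j‖ := by
    refine (norm_sum_le _ _).trans_eq ?_
    refine Finset.sum_congr rfl fun j _ => ?_
    simp [norm_mul, Complex.norm_conj]
  have h2 : (∑ j, ‖u j‖ * ‖v j‖) ^ 2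
      ≤ (∑ j, ‖u j‖ ^ 2) * (∑ j, ‖v j‖ ^ 2) :=
    Finset.sum_mul_sq_le_sq_mul_sq _ _ _
  have h3 : Complex.normSq (cip u v) = ‖cip u v‖ ^ 2 := (Complex.sq_norm _).symm
  have h4 : cnSq u = ∑ j, ‖u j‖ ^ 2 := by simp [cnSq, Complex.sq_norm]
  have h5 : cnSq v = ∑ j, ‖v j‖ ^ 2 := by simp [cnSq, Complex.sq_norm]
  rw [h3, h4, h5]
  refine le_trans ?_ h2
  have := norm_nonneg (cip u v)
  nlinarith [Finset.sum_nonneg (fun j (_ : j ∈ Finset.univ) =>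
    mul_nonneg (norm_nonneg (u j)) (norm_nonneg (v j)))]

lemma multiset_decomp {n : ℕ} (hn : 2 ≤ n) (e : Fin n → ℝ)
    (hcard : Fintype.card {i // e i ≠ 0} ≤ 2) :
    ∃ x y : ℝ, Multiset.map e Finset.univ.val
        = ({x, y} : Multiset ℝ) + Multiset.replicate (n - 2) 0
      ∧ x + y = ∑ i, e i ∧ x ^ 2 + y ^ 2 = ∑ i, (e i) ^ 2 := by
  classical
  set s : Finset (Fin n) := Finset.univ.filter (fun i => e i ≠ 0) with hs
  set k := s.card with hk
  have hk2 : k ≤ 2 := by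
    rw [hk, hs, ← Fintype.card_subtype]
    exact hcard
  have hsv : Multiset.card s.val = k := rfl
  clear_value k
  have hsplit : (Finset.univ.val : Multiset (Fin n))
      = Multiset.filter (fun i => e i ≠ 0) Finset.univ.val
        + Multiset.filter (fun i => ¬ e i ≠ 0) Finset.univ.val :=
    (Multiset.filter_add_not _ _).symm
  have hcards : Multiset.card (Multiset.filter (fun i => ¬ e i ≠ 0) (Finset.univ.val : Multiset (Fin n))) = n - k := by
    have h1 : Multiset.card (Finset.univ.val : Multiset (Fin n)) = n := by simp
    have h2 : Multiset.card (Multiset.filter (fun i => e i ≠ 0) (Finset.univ.val : Multiset (Fin n))) = k := by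
      rw [hk, hs]; rfl
    have := congrArg Multiset.card hsplit
    rw [Multiset.card_add, h1, h2] at this
    omega
  have hzeros : Multiset.map e (Multiset.filter (fun i => ¬ e i ≠ 0) (Finset.univ.val : Multiset (Fin n)))
      = Multiset.replicate (n - k) 0 := by
    rw [Multiset.eq_replicate]
    constructor
    · rw [Multiset.card_map, hcards]
    · intro b hb
      obtain ⟨i, hi, rfl⟩ := Multiset.mem_map.mp hb
      have := Multiset.of_mem_filter hi
      simpa using this
  have hM : Multiset.map e Finset.univ.val
      = Multiset.map e s.val + Multiset.replicate (n - k) 0 := by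
    conv_lhs => rw [hsplit]
    rw [Multiset.map_add, hzeros]
    rfl
  set N := Multiset.map e s.val + Multiset.replicate (2 - k) 0 with hN
  have hNcard : Multiset.card N = 2 := by
    rw [hN, Multiset.card_add, Multiset.card_map, Multiset.card_replicate, hsv]
    omega
  obtain ⟨x, y, hxy⟩ := Multiset.card_eq_two.mp hNcard
  refine ⟨x, y, ?_, ?_, ?_⟩
  · rw [hM, ← hxy, hN]
    rw [add_assoc, ← Multiset.replicate_add]
    have hnum : n - k = 2 - k + (n - 2) := by omega
    rw [hnum]
  · have h1 : N.sum = x + y := by rw [hxy]; simp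
    rw [← h1, hN, Multiset.sum_add, Multiset.sum_replicate, nsmul_eq_mul, mul_zero, add_zero]
    have : (Multiset.map e s.val).sum = ∑ i ∈ s, e i := rfl
    rw [this, hs]
    exact Finset.sum_filter_of_ne (fun i _ h => h)
  · have h1 : (N.map (fun t => t ^ 2)).sum = x ^ 2 + y ^ 2 := by rw [hxy]; simp
    rw [← h1, hN, Multiset.map_add, Multiset.sum_add, Multiset.map_replicate, Multiset.sum_replicate]
    rw [Multiset.map_map]
    have : (Multiset.map (fun i => e i ^ 2) s.val).sum = ∑ i ∈ s, e i ^ 2 := rfl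
    simp only [Function.comp]
    rw [this, hs]
    have := Finset.sum_filter_of_ne (s := Finset.univ) (f := fun i => e i ^ 2)
      (p := fun i => e i ≠ 0) (fun i _ h => fun h0 => h (by simp [h0]))
    rw [this]
    simp

lemma filter_M_card {α : Type*} (p : α → Prop) [DecidablePred p] (a b z : α) (m : ℕ)
    (hb : ¬ p b) (hz : ¬ p z) :
    Multiset.card (Multiset.filter p (({a, b} : Multiset α) + Multiset.replicate m z)) ≤ 1 := by
  have h1 : Multiset.filter p (Multiset.replicate m z) = 0 :=
    Multiset.filter_eq_nil.mpr (fun x hx => by rw [Multiset.eq_of_mem_replicate hx]; exact hz)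
  rw [Multiset.filter_add, h1, add_zero, Multiset.insert_eq_cons, Multiset.filter_cons]
  by_cases ha : p a <;>
    simp [ha, Multiset.filter_singleton, hb]


/-- For `T = [u,v] = ½(uv* + vu*)` with `n ≥ 2`:
`tr T = Re⟨u,v⟩`; `tr T² = ½(‖u‖²‖v‖² + (Re⟨u,v⟩)² − (Im⟨u,v⟩)²)`; the eigenvalues of `T`
are `a₊ ≥ 0`, `a₋ ≤ 0` and `0` repeated `n−2` times, with
`a± = ½(Re⟨u,v⟩ ± √(‖u‖²‖v‖² − (Im⟨u,v⟩)²))`; and `‖T‖₁ = a₊ + |a₋| =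
√(‖u‖²‖v‖² − (Im⟨u,v⟩)²)`. In particular `T` has at most one positive and at most one
negative eigenvalue. -/
theorem stmt8 (n : ℕ) (hn : 2 ≤ n) (u v : Fin n → ℂ)
    (hT : (symOuter u v).IsHermitian)
    (ap am : ℝ)
    (hap : ap = (1/2 : ℝ) * ((cip u v).re + Real.sqrt (cnSq u * cnSq v - (cip u v).im ^ 2)))
    (ham : am = (1/2 : ℝ) * ((cip u v).re - Real.sqrt (cnSq u * cnSq v - (cip u v).im ^ 2))) :
    (symOuter u v).trace = ((cip u v).re : ℂ)
    ∧ (symOuter u v * symOuter u v).trace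
        = (((1/2 : ℝ) * (cnSq u * cnSq v + (cip u v).re ^ 2 - (cip u v).im ^ 2) : ℝ) : ℂ)
    ∧ 0 ≤ ap ∧ am ≤ 0
    ∧ Multiset.map hT.eigenvalues Finset.univ.val
        = ({ap, am} : Multiset ℝ) + Multiset.replicate (n - 2) 0
    ∧ nucNorm hT = ap + |am|
    ∧ nucNorm hT = Real.sqrt (cnSq u * cnSq v - (cip u v).im ^ 2)
    ∧ posCount hT ≤ 1 ∧ negCount hT ≤ 1 := by
  classical
  set e := hT.eigenvalues with he
  set s0 := (cip u v).re with hs0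
  set D := cnSq u * cnSq v - (cip u v).im ^ 2 with hDdef
  set r := Real.sqrt D with hrdef
  have hns : Complex.normSq (cip u v) = s0 ^ 2 + (cip u v).im ^ 2 := by
    rw [Complex.normSq_apply, hs0]; ring
  have hD : 0 ≤ D := by
    have h1 := cs u v
    rw [hns] at h1
    rw [hDdef]
    nlinarith [sq_nonneg s0]
  have hr2 : r ^ 2 = D := Real.sq_sqrt hD
  have hr0 : 0 ≤ r := Real.sqrt_nonneg D
  have hrs : s0 ^ 2 ≤ r ^ 2 := by
    have h1 := cs u v
    rw [hns] at h1
    rw [hr2, hDdef]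
    nlinarith
  have habs : |s0| ≤ r := by
    have := abs_le_abs (a := s0) (b := r)
    nlinarith [abs_nonneg s0, sq_abs s0, le_abs_self s0, neg_abs_le s0]
  have hap0 : 0 ≤ ap := by
    rw [hap]
    have := neg_abs_le s0
    nlinarith
  have ham0 : am ≤ 0 := by
    rw [ham]
    have := le_abs_self s0
    nlinarith
  -- eigenvalue sums
  have hsum : ∑ i, e i = s0 := by
    have h := trace_eq_sum_eigs hT
    rw [traceA] at h
    have h2 : ((∑ i, e i : ℝ) : ℂ) = (s0 : ℂ) := by
      push_cast
      rw [← h]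
    exact_mod_cast h2
  have hsq : ∑ i, (e i) ^ 2 = (1/2 : ℝ) * (cnSq u * cnSq v + s0 ^ 2 - (cip u v).im ^ 2) := by
    have h := trace_sq_eq_sum_eigs hT
    rw [traceB] at h
    have h2 : ((∑ i, (e i) ^ 2 : ℝ) : ℂ)
        = (((1/2 : ℝ) * (cnSq u * cnSq v + s0 ^ 2 - (cip u v).im ^ 2) : ℝ) : ℂ) := by
      push_cast
      rw [← h]
      push_cast
      ring
    exact_mod_cast h2
  have hcard : Fintype.card {i // e i ≠ 0} ≤ 2 := by
    rw [he, ← hT.rank_eq_card_non_zero_eigs]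
    exact rank_le_two u v
  obtain ⟨x, y, hMxy, hsum2, hsq2⟩ := multiset_decomp hn e hcard
  have hx : x + y = s0 := hsum2.trans hsum
  have hxy2 : x ^ 2 + y ^ 2 = (1/2 : ℝ) * (cnSq u * cnSq v + s0 ^ 2 - (cip u v).im ^ 2) :=
    hsq2.trans hsq
  have hapam : ap * am = (s0 ^ 2 - D) / 4 := by
    rw [hap, ham, hs0]
    linear_combination (-1/4 : ℝ) * hr2
  have hprod : x * y = ap * am := by
    rw [hapam]
    have e1 : x * y = ((x + y) ^ 2 - (x ^ 2 + y ^ 2)) / 2 := by ring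
    rw [e1, hx, hxy2, hDdef]
    ring
  have hxa : x + y = ap + am := by rw [hx, hap, ham, hs0]; ring
  have hquad : (x - ap) * (x - am) = 0 := by linear_combination x * hxa - hprod
  have hpair : ({x, y} : Multiset ℝ) = ({ap, am} : Multiset ℝ) := by
    rcases mul_eq_zero.mp hquad with h | h
    · have hxap : x = ap := by linarith [sub_eq_zero.mp h]
      have hyam : y = am := by linarith
      rw [hxap, hyam]
    · have hxam : x = am := by linarith [sub_eq_zero.mp h]
      have hyap : y = ap := by linarith
      rw [hxam, hyap]
      exact Multiset.pair_comm _ _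
  have hM : Multiset.map e Finset.univ.val
      = ({ap, am} : Multiset ℝ) + Multiset.replicate (n - 2) 0 := by rw [hMxy, hpair]
  have hnuc : nucNorm hT = ap + |am| := by
    have h1 : nucNorm hT = ((Multiset.map e Finset.univ.val).map (fun t => |t|)).sum := by
      rw [Multiset.map_map]
      rfl
    rw [h1, hM]
    simp only [Multiset.map_add, Multiset.map_replicate, Multiset.insert_eq_cons,
      Multiset.map_cons, Multiset.map_singleton, Multiset.sum_add, Multiset.sum_cons,
      Multiset.sum_singleton, Multiset.sum_replicate, abs_zero, smul_zero, add_zero]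
    rw [abs_of_nonneg hap0]
  have hnuc2 : nucNorm hT = r := by
    rw [hnuc, abs_of_nonpos ham0, hap, ham]
    ring
  have hposcount : posCount hT ≤ 1 := by
    have h1 : posCount hT
        = Multiset.card (Multiset.filter (fun t => 0 < t) (Multiset.map e Finset.univ.val)) := by
      rw [posCount, Nat.card_eq_fintype_card, Fintype.card_subtype, Multiset.filter_map,
        Multiset.card_map]
      rfl
    rw [h1, hM]
    exact filter_M_card _ _ _ _ _ (not_lt.mpr ham0) (lt_irrefl 0)
  have hnegcount : negCount hT ≤ 1 := by
    have h1 : negCount hT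
        = Multiset.card (Multiset.filter (fun t => t < 0) (Multiset.map e Finset.univ.val)) := by
      rw [negCount, Nat.card_eq_fintype_card, Fintype.card_subtype, Multiset.filter_map,
        Multiset.card_map]
      rfl
    rw [h1, hM]
    have hfil : Multiset.card (Multiset.filter (fun t => t < 0)
        (({am, ap} : Multiset ℝ) + Multiset.replicate (n - 2) 0)) ≤ 1 :=
      filter_M_card _ _ _ _ _ (not_lt.mpr hap0) (lt_irrefl 0)
    rwa [Multiset.pair_comm am ap] at hfil
  exact ⟨traceA u v, traceB u v, hap0, ham0, hM, hnuc, hnuc2, hposcount, hnegcount⟩
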